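/- Let M be a positive integer, χ a primitive Dirichlet character modulo M, q a positive integer with gcd(q, M) = 1, a an integer, and g : ℝ → ℂ a Schwartz function. Then Σ_{m∈ℤ} χ(m) e^{−2πiam/q} g(m) = (τ(χ) χ(q) / M) · Σ_{h∈ℤ, h ≡ aM (mod q)} χ̄(h) ĝ(h/(Mq)), where both series converge absolutely. -/

import Mathlib

open MeasureTheory Complex

/-- The Fourier transform `ĝ(ξ) = ∫_ℝ g(y) e^{-2πiξy} dy`. -/
noncomputable def fourierHat (g : ℝ → ℂ) (ξ : ℝ) : ℂ :=
  ∫ y : ℝ, g y * Complex.exp (-(2 * Real.pi * Complex.I * ξ * y))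

/-- The Gauss sum `τ(χ) = ∑_{b=1}^{M} χ(b) e^{2πib/M}`. -/
noncomputable def gaussSumExp (M : ℕ) (χ : DirichletCharacter ℂ M) : ℂ :=
  ∑ b ∈ Finset.Icc 1 M, χ (b : ZMod M) * Complex.exp (2 * Real.pi * Complex.I * b / M)

noncomputable def scaleCLE (c : ℝ) (hc : c ≠ 0) : ℝ ≃L[ℝ] ℝ :=
  ContinuousLinearEquiv.equivOfInverse (c • ContinuousLinearMap.id ℝ ℝ)
    (c⁻¹ • ContinuousLinearMap.id ℝ ℝ)
    (fun x => by simp [smul_eq_mul]; field_simp)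
    (fun x => by simp [smul_eq_mul]; field_simp)

noncomputable def schwartzScale (f : SchwartzMap ℝ ℂ) {c : ℝ} (hc : c ≠ 0) : SchwartzMap ℝ ℂ :=
  SchwartzMap.compCLMOfContinuousLinearEquiv ℝ (scaleCLE c hc) f

lemma schwartzScale_apply (f : SchwartzMap ℝ ℂ) {c : ℝ} (hc : c ≠ 0) (x : ℝ) :
    schwartzScale f hc x = f (c * x) := rfl

lemma schwartz_summable_int (f : SchwartzMap ℝ ℂ) : Summable fun n : ℤ => ‖f n‖ := by
  have h := (f.isBigO_cocompact_rpow (-2)).norm_left.comp_tendsto Int.tendsto_coe_cofinite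
  exact summable_of_isBigO (Real.summable_abs_int_rpow one_lt_two)
    (by simpa [Real.norm_eq_abs, Function.comp_def] using h)

lemma fourierHat_eq (g : ℝ → ℂ) (ξ : ℝ) : fourierHat g ξ = FourierTransform.fourier g ξ := by
  rw [Real.fourier_real_eq_integral_exp_smul, fourierHat]
  congr 1
  ext v
  rw [smul_eq_mul, mul_comm]
  congr 1
  push_cast
  ring

lemma fourier_scale (f : SchwartzMap ℝ ℂ) {c : ℝ} (hc : 0 < c) (ξ : ℝ) :
    FourierTransform.fourier (fun x => f (c * x)) ξ
      = (c : ℂ)⁻¹ * FourierTransform.fourier (⇑f) (ξ / c) := by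
  rw [Real.fourier_real_eq_integral_exp_smul,
    Real.fourier_real_eq_integral_exp_smul]
  have h1 : (∫ v : ℝ, Complex.exp (↑(-2 * Real.pi * v * ξ) * I) • f (c * v))
      = ∫ v : ℝ, (fun u => Complex.exp (↑(-2 * Real.pi * (u / c) * ξ) * I) • f u) (c * v) := by
    congr 1; ext v; simp only []; rw [mul_div_cancel_left₀ _ hc.ne']
  rw [h1, MeasureTheory.Measure.integral_comp_mul_left
    (fun u => Complex.exp (↑(-2 * Real.pi * (u / c) * ξ) * I) • f u) c]
  have h2 : ∀ u : ℝ, -2 * Real.pi * (u / c) * ξ = -2 * Real.pi * u * (ξ / c) := fun u => by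
    field_simp
  simp_rw [h2, abs_of_pos (inv_pos.mpr hc)]
  rw [Complex.real_smul, Complex.ofReal_inv]

lemma poisson_scaled (g : SchwartzMap ℝ ℂ) {c : ℝ} (hc : 0 < c) (x : ℝ) :
    ∑' n : ℤ, g (x + c * n)
      = ∑' h : ℤ, (c : ℂ)⁻¹ * FourierTransform.fourier (⇑g) (h / c)
          * Complex.exp (2 * Real.pi * Complex.I * h * x / c) := by
  have key := (schwartzScale g hc.ne').tsum_eq_tsum_fourier (x / c)
  have hL : ∀ n : ℤ, schwartzScale g hc.ne' (x / c + n) = g (x + c * n) := by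
    intro n
    rw [schwartzScale_apply]
    field_simp
  have hR : ∀ h : ℤ, (FourierTransform.fourier (schwartzScale g hc.ne')) h
        * fourier h ((x / c : ℝ) : UnitAddCircle)
      = (c : ℂ)⁻¹ * FourierTransform.fourier (⇑g) (h / c)
          * Complex.exp (2 * Real.pi * Complex.I * h * x / c) := by
    intro h
    have h1 : (FourierTransform.fourier (schwartzScale g hc.ne')) (h : ℝ)
        = (c : ℂ)⁻¹ * FourierTransform.fourier (⇑g) (h / c) := by
      rw [SchwartzMap.fourier_coe]
      exact fourier_scale g hc h
    rw [h1, fourier_coe_apply]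
    congr 1
    push_cast
    rw [div_one]
    congr 1
    field_simp
  rw [← tsum_congr hL, key, tsum_congr hR]

def zmodIntEquiv (N : ℕ) [NeZero N] : ZMod N × ℤ ≃ ℤ where
  toFun p := (p.1.val : ℤ) + N * p.2
  invFun m := ((m : ZMod N), (m - ((m : ZMod N).val : ℤ)) / N)
  left_inv p := by
    have hN : (N : ℤ) ≠ 0 := Int.natCast_ne_zero.mpr (NeZero.ne N)
    have h1 : (((p.1.val : ℤ) + N * p.2 : ℤ) : ZMod N) = p.1 := by
      push_cast
      simp [ZMod.natCast_rightInverse p.1, ZMod.natCast_self]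
    ext
    · simp [h1]
    · simp only [h1]
      rw [add_sub_cancel_left, Int.mul_ediv_cancel_left _ hN]
  right_inv m := by
    have hN : (N : ℤ) ≠ 0 := Int.natCast_ne_zero.mpr (NeZero.ne N)
    have hdvd : (N : ℤ) ∣ m - ((m : ZMod N).val : ℤ) := by
      rw [← ZMod.intCast_zmod_eq_zero_iff_dvd]
      push_cast
      simp [ZMod.natCast_rightInverse (m : ZMod N)]
    simp only []
    rw [Int.mul_ediv_cancel' hdvd]
    ring

lemma zmodIntEquiv_apply {N : ℕ} [NeZero N] (p : ZMod N × ℤ) :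
    zmodIntEquiv N p = (p.1.val : ℤ) + N * p.2 := rfl

lemma tsum_int_eq_sum_zmod {F : ℤ → ℂ} (hF : Summable F) (N : ℕ) [NeZero N] :
    ∑' m : ℤ, F m = ∑ r : ZMod N, ∑' n : ℤ, F ((r.val : ℤ) + N * n) := by
  rw [← (zmodIntEquiv N).tsum_eq F]
  have hs : Summable (F ∘ zmodIntEquiv N) := ((zmodIntEquiv N).summable_iff).mpr hF
  rw [show (fun p : ZMod N × ℤ => F (zmodIntEquiv N p)) = F ∘ zmodIntEquiv N from rfl]
  rw [hs.tsum_prod' (fun r => hs.comp_injective (fun a b h => by simpa using h)), tsum_fintype]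
  rfl

lemma gaussSumExp' (M : ℕ) [NeZero M] (χ : DirichletCharacter ℂ M) :
    (∑ b ∈ Finset.Icc 1 M, χ (b : ZMod M)
      * Complex.exp (2 * Real.pi * Complex.I * b / M)) = gaussSum χ ZMod.stdAddChar := by
  rw [gaussSum]
  refine Finset.sum_nbij' (fun b => (b : ZMod M)) (fun x => if x.val = 0 then M else x.val)
    ?_ ?_ ?_ ?_ ?_
  · intro b _; exact Finset.mem_univ _
  · intro x _
    rcases eq_or_ne x.val 0 with h | h
    · simp only [h, if_pos rfl]
      exact Finset.mem_Icc.mpr ⟨Nat.one_le_iff_ne_zero.mpr (NeZero.ne M), le_rfl⟩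
    · simp only [if_neg h]
      exact Finset.mem_Icc.mpr ⟨Nat.one_le_iff_ne_zero.mpr h, (ZMod.val_lt x).le⟩
  · intro b hb
    rcases Finset.mem_Icc.mp hb with ⟨h1, h2⟩
    rcases eq_or_lt_of_le h2 with h | h
    · subst h
      simp [ZMod.natCast_self]
    · rw [ZMod.val_natCast_of_lt h, if_neg (by omega)]
  · intro x _
    rcases eq_or_ne x.val 0 with h | h
    · simp only [h, if_pos rfl, ZMod.natCast_self]
      exact ((ZMod.val_eq_zero x).mp h).symm
    · simp only [if_neg h]
      exact ZMod.natCast_rightInverse x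
  · intro b _
    congr 1
    rw [show ((b : ℕ) : ZMod M) = ((b : ℤ) : ZMod M) by push_cast; rfl, ZMod.stdAddChar_coe]
    push_cast
    rfl

lemma char_sum_eval (M q : ℕ) [NeZero M] [NeZero q] [NeZero (M * q)]
    (χ : DirichletCharacter ℂ M)
    (hχ : χ.IsPrimitive) (hqM : Nat.gcd q M = 1) (k : ℤ) :
    (∑ r : ZMod (M * q), χ (ZMod.castHom (dvd_mul_right M q) (ZMod M) r) *
        ZMod.stdAddChar ((k : ZMod (M * q)) * r))
      = χ (q : ZMod M) * (χ⁻¹ ((k : ZMod M)) * gaussSum χ ZMod.stdAddChar) *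
          (if (k : ZMod q) = 0 then (q : ℂ) else 0) := by
  set N := M * q with hN
  -- the CRT-style bijection
  set φ : ZMod M × ZMod q → ZMod N :=
    fun p => (q : ZMod N) * ((p.1.val : ZMod N)) + (M : ZMod N) * ((p.2.val : ZMod N)) with hφ
  have hquM : IsUnit (q : ZMod M) := (ZMod.isUnit_iff_coprime q M).mpr hqM
  have hMuq : IsUnit (M : ZMod q) := (ZMod.isUnit_iff_coprime M q).mpr (Nat.coprime_comm.mp hqM)
  have hπM : ∀ p : ZMod M × ZMod q,
      ZMod.castHom (dvd_mul_right M q) (ZMod M) (φ p) = (q : ZMod M) * p.1 := by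
    intro p
    simp only [hφ, map_add, map_mul, map_natCast, ZMod.natCast_self, zero_mul, add_zero]
    rw [ZMod.natCast_rightInverse p.1]
  have hπq : ∀ p : ZMod M × ZMod q,
      ZMod.castHom (dvd_mul_left q M) (ZMod q) (φ p) = (M : ZMod q) * p.2 := by
    intro p
    simp only [hφ, map_add, map_mul, map_natCast, ZMod.natCast_self, zero_mul, zero_add]
    rw [ZMod.natCast_rightInverse p.2]
  have hbij : Function.Bijective φ := by
    rw [Fintype.bijective_iff_injective_and_card]
    constructor
    · intro p p' h
      have h1 : (q : ZMod M) * p.1 = (q : ZMod M) * p'.1 := by rw [← hπM, ← hπM, h]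
      have h2 : (M : ZMod q) * p.2 = (M : ZMod q) * p'.2 := by rw [← hπq, ← hπq, h]
      ext
      · exact hquM.mul_left_cancel h1
      · exact hMuq.mul_left_cancel h2
    · simp [ZMod.card, hN]
  rw [← Fintype.sum_bijective φ hbij _ _ (fun p => rfl)]
  rw [Fintype.sum_prod_type]
  -- compute the summand
  have hval : ∀ (s : ZMod M) (t : ZMod q),
      χ (ZMod.castHom (dvd_mul_right M q) (ZMod M) (φ (s, t))) *
          ZMod.stdAddChar ((k : ZMod N) * φ (s, t))
        = (χ (q : ZMod M) * (χ s * ZMod.stdAddChar ((k : ZMod M) * s)))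
            * ZMod.stdAddChar ((k : ZMod q) * t) := by
    intro s t
    rw [hπM (s, t), map_mul]
    have hsplit : (k : ZMod N) * φ (s, t)
        = ((k * q * (s.val : ℤ) : ℤ) : ZMod N) + ((k * M * (t.val : ℤ) : ℤ) : ZMod N) := by
      simp only [hφ]
      push_cast
      ring
    rw [hsplit, AddChar.map_add_eq_mul, ZMod.stdAddChar_coe, ZMod.stdAddChar_coe]
    have hs' : ZMod.stdAddChar ((k : ZMod M) * s)
        = Complex.exp (2 * Real.pi * Complex.I * (k * q * (s.val : ℤ)) / N) := by
      rw [show (k : ZMod M) * s = ((k * (s.val : ℤ) : ℤ) : ZMod M) by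
        push_cast; rw [ZMod.natCast_rightInverse s], ZMod.stdAddChar_coe]
      congr 1
      have hq0 : (q : ℂ) ≠ 0 := Nat.cast_ne_zero.mpr (NeZero.ne q)
      have hM0 : (M : ℂ) ≠ 0 := Nat.cast_ne_zero.mpr (NeZero.ne M)
      rw [hN]
      push_cast
      field_simp
    have ht' : ZMod.stdAddChar ((k : ZMod q) * t)
        = Complex.exp (2 * Real.pi * Complex.I * (k * M * (t.val : ℤ)) / N) := by
      rw [show (k : ZMod q) * t = ((k * (t.val : ℤ) : ℤ) : ZMod q) by
        push_cast; rw [ZMod.natCast_rightInverse t], ZMod.stdAddChar_coe]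
      congr 1
      have hq0 : (q : ℂ) ≠ 0 := Nat.cast_ne_zero.mpr (NeZero.ne q)
      have hM0 : (M : ℂ) ≠ 0 := Nat.cast_ne_zero.mpr (NeZero.ne M)
      rw [hN]
      push_cast
      field_simp
    rw [hs', ht']
    push_cast
    ring
  simp_rw [hval]
  rw [← Finset.sum_mul_sum]
  have hgauss : (∑ s : ZMod M, χ s * ZMod.stdAddChar ((k : ZMod M) * s))
      = χ⁻¹ ((k : ZMod M)) * gaussSum χ ZMod.stdAddChar := by
    rw [← gaussSum_mulShift_of_isPrimitive ZMod.stdAddChar hχ ((k : ZMod M))]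
    rw [gaussSum]
    exact Finset.sum_congr rfl fun s _ => by rw [AddChar.mulShift_apply]
  have hq : (∑ t : ZMod q, ZMod.stdAddChar ((k : ZMod q) * t))
      = if (k : ZMod q) = 0 then (q : ℂ) else 0 := by
    split_ifs with h
    · simp [h, ZMod.card]
    · have := AddChar.sum_eq_zero_of_ne_one (ZMod.isPrimitive_stdAddChar q h)
      rw [← this]
      exact Finset.sum_congr rfl fun t _ => by rw [AddChar.mulShift_apply]
  rw [← Finset.mul_sum, hgauss, hq, mul_assoc]

lemma norm_exp_eq_one_aux (r : ℝ) (z : ℂ) (hz : z = (r : ℂ) * Complex.I) :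
    ‖Complex.exp z‖ = 1 := by rw [hz]; exact Complex.norm_exp_ofReal_mul_I r

/-- Twisted Poisson summation: for a primitive character `χ mod M`, `gcd(q,M)=1`, and a
Schwartz function `g`,
`∑_m χ(m) e^{-2πiam/q} g(m) = (τ(χ)χ(q)/M) ∑_{h ≡ aM (mod q)} χ̄(h) ĝ(h/(Mq))`,
both series converging absolutely. -/
theorem twisted_poisson_summation
    (M : ℕ) (hM : 0 < M) (χ : DirichletCharacter ℂ M) (hχ : χ.IsPrimitive)
    (q : ℕ) (hq : 0 < q) (hqM : Nat.gcd q M = 1) (a : ℤ) (g : SchwartzMap ℝ ℂ) :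
    Summable (fun m : ℤ =>
      ‖χ (m : ZMod M) * Complex.exp (-(2 * Real.pi * Complex.I * a * m / q)) * g m‖) ∧
    Summable (fun h : ℤ =>
      ‖if (h : ZMod q) = ((a * M : ℤ) : ZMod q) then
          (starRingEnd ℂ) (χ (h : ZMod M)) * fourierHat g ((h : ℝ) / (M * q))
        else 0‖) ∧
    (∑' m : ℤ, χ (m : ZMod M) *
        Complex.exp (-(2 * Real.pi * Complex.I * a * m / q)) * g m) =
      (gaussSumExp M χ * χ (q : ZMod M) / M) *
        ∑' h : ℤ,
          if (h : ZMod q) = ((a * M : ℤ) : ZMod q) then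
            (starRingEnd ℂ) (χ (h : ZMod M)) * fourierHat g ((h : ℝ) / (M * q))
          else 0 := by
  haveI : NeZero M := ⟨hM.ne'⟩
  haveI : NeZero q := ⟨hq.ne'⟩
  haveI : NeZero (M * q) := ⟨mul_ne_zero hM.ne' hq.ne'⟩
  have hM0 : (M : ℂ) ≠ 0 := Nat.cast_ne_zero.mpr hM.ne'
  have hq0 : (q : ℂ) ≠ 0 := Nat.cast_ne_zero.mpr hq.ne'
  set c : ℝ := ((M * q : ℕ) : ℝ) with hc
  have hcpos : 0 < c := by
    rw [hc]
    exact_mod_cast Nat.mul_pos hM hq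
  have hc0 : ((c : ℝ) : ℂ) ≠ 0 := Complex.ofReal_ne_zero.mpr hcpos.ne'
  -- norm of the exponential factors
  have hexp1 : ∀ m : ℤ,
      ‖Complex.exp (-(2 * Real.pi * Complex.I * a * m / q))‖ = 1 := fun m =>
    norm_exp_eq_one_aux (-(2 * Real.pi * a * m / q)) _ (by push_cast; ring)
  -- summability of the left-hand side
  have hg_sum := schwartz_summable_int g
  have S1 : Summable (fun m : ℤ =>
      ‖χ (m : ZMod M) * Complex.exp (-(2 * Real.pi * Complex.I * a * m / q)) * g m‖) := by
    refine Summable.of_nonneg_of_le (fun _ => norm_nonneg _) (fun m => ?_) hg_sum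
    rw [norm_mul, norm_mul, hexp1 m, mul_one]
    calc ‖χ (m : ZMod M)‖ * ‖g (m : ℝ)‖
        ≤ 1 * ‖g (m : ℝ)‖ :=
          mul_le_mul_of_nonneg_right (DirichletCharacter.norm_le_one χ _) (norm_nonneg _)
      _ = ‖g (m : ℝ)‖ := one_mul _
  -- summability of the Fourier side
  set Fg := SchwartzMap.fourierTransformCLM ℝ g with hFgdef
  have hcinv : (c⁻¹ : ℝ) ≠ 0 := inv_ne_zero hcpos.ne'
  have hFsum : Summable (fun h : ℤ => ‖FourierTransform.fourier (⇑g) ((h : ℝ) / c)‖) := by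
    refine (schwartz_summable_int (schwartzScale Fg hcinv)).congr fun h => ?_
    rw [schwartzScale_apply, inv_mul_eq_div, hFgdef, SchwartzMap.fourierTransformCLM_apply,
      SchwartzMap.fourier_coe]
  have hHat : ∀ h : ℤ, fourierHat (⇑g) ((h : ℝ) / ((M : ℝ) * (q : ℝ)))
      = FourierTransform.fourier (⇑g) ((h : ℝ) / c) := by
    intro h
    rw [fourierHat_eq, hc]
    push_cast
    rfl
  have S2 : Summable (fun h : ℤ =>
      ‖if (h : ZMod q) = ((a * M : ℤ) : ZMod q) then
          (starRingEnd ℂ) (χ (h : ZMod M)) * fourierHat g ((h : ℝ) / (M * q))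
        else 0‖) := by
    refine Summable.of_nonneg_of_le (fun _ => norm_nonneg _) (fun h => ?_) hFsum
    by_cases hcond : (h : ZMod q) = ((a * M : ℤ) : ZMod q)
    · rw [if_pos hcond, norm_mul, hHat h]
      have h1 : ‖(starRingEnd ℂ) (χ (h : ZMod M))‖ ≤ 1 := by
        rw [RCLike.norm_conj]
        exact DirichletCharacter.norm_le_one χ _
      calc ‖(starRingEnd ℂ) (χ (h : ZMod M))‖ * ‖FourierTransform.fourier (⇑g) ((h : ℝ) / c)‖
          ≤ 1 * ‖FourierTransform.fourier (⇑g) ((h : ℝ) / c)‖ :=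
            mul_le_mul_of_nonneg_right h1 (norm_nonneg _)
        _ = _ := one_mul _
    · rw [if_neg hcond, norm_zero]
      exact norm_nonneg _
  refine ⟨S1, S2, ?_⟩
  set τ : ℂ := gaussSum χ ZMod.stdAddChar with hτ
  set A : ZMod (M * q) := ((-(a * M) : ℤ) : ZMod (M * q)) with hA
  set c1 : ZMod (M * q) → ℂ := fun ρ =>
    χ (ZMod.castHom (dvd_mul_right M q) (ZMod M) ρ) * ZMod.stdAddChar (A * ρ) with hc1
  have hc1m : ∀ m : ℤ,
      χ (m : ZMod M) * Complex.exp (-(2 * Real.pi * Complex.I * a * m / q))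
        = c1 ((m : ZMod (M * q))) := by
    intro m
    have e1 : ZMod.castHom (dvd_mul_right M q) (ZMod M) ((m : ZMod (M * q)))
        = ((m : ℤ) : ZMod M) := map_intCast _ m
    have e2 : A * ((m : ZMod (M * q))) = ((-(a * M) * m : ℤ) : ZMod (M * q)) := by
      rw [hA]; push_cast; ring
    have harg : (-(2 * Real.pi * Complex.I * a * m / q) : ℂ)
        = 2 * Real.pi * Complex.I * ((-(a * M) * m : ℤ) : ℂ) / ((M * q : ℕ) : ℂ) := by
      push_cast
      field_simp
    rw [hc1]
    simp only [e1, e2, ZMod.stdAddChar_coe, harg]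
  have hc1norm : ∀ ρ, ‖c1 ρ‖ ≤ 1 := by
    intro ρ
    rw [hc1]
    simp only []
    rw [norm_mul]
    have h2 : ‖ZMod.stdAddChar (A * ρ)‖ = 1 := by
      rw [show A * ρ = (((A * ρ).val : ℤ) : ZMod (M * q)) by
        push_cast; rw [ZMod.natCast_rightInverse (A * ρ)], ZMod.stdAddChar_coe]
      exact norm_exp_eq_one_aux (2 * Real.pi * ((A * ρ).val : ℝ) / c) _ (by rw [hc]; push_cast; ring)
    rw [h2, mul_one]
    exact DirichletCharacter.norm_le_one χ _
  -- rewrite the LHS summand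
  have hfun : (fun m : ℤ => χ (m : ZMod M)
        * Complex.exp (-(2 * Real.pi * Complex.I * a * m / q)) * g m)
      = fun m : ℤ => c1 ((m : ZMod (M * q))) * g m := funext fun m => by rw [hc1m m]
  have hFsummable : Summable (fun m : ℤ => c1 ((m : ZMod (M * q))) * g m) := by
    rw [← hfun]; exact S1.of_norm
  rw [show (∑' m : ℤ, χ (m : ZMod M)
        * Complex.exp (-(2 * Real.pi * Complex.I * a * m / q)) * g m)
      = ∑' m : ℤ, c1 ((m : ZMod (M * q))) * g m from by rw [hfun]]
  rw [tsum_int_eq_sum_zmod hFsummable (M * q)]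
  -- Poisson summation in each residue class
  have hcastr : ∀ (r : ZMod (M * q)) (n : ℤ),
      ((((r.val : ℤ) + ((M * q : ℕ) : ℤ) * n : ℤ)) : ZMod (M * q)) = r := by
    intro r n
    push_cast
    rw [show ((M : ZMod (M * q)) * (q : ZMod (M * q)) : ZMod (M * q)) = 0 by
      rw [← Nat.cast_mul, ZMod.natCast_self]]
    simp [ZMod.natCast_rightInverse r]
  have hrow : ∀ r : ZMod (M * q),
      (∑' n : ℤ, c1 ((((r.val : ℤ) + ((M * q : ℕ) : ℤ) * n : ℤ)) : ZMod (M * q))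
          * g (((r.val : ℤ) + ((M * q : ℕ) : ℤ) * n : ℤ) : ℝ))
        = c1 r * ∑' h : ℤ, ((c : ℝ) : ℂ)⁻¹ * FourierTransform.fourier (⇑g) (h / c)
            * Complex.exp (2 * Real.pi * Complex.I * h * (r.val : ℝ) / c) := by
    intro r
    have e3 : ∀ n : ℤ, c1 ((((r.val : ℤ) + ((M * q : ℕ) : ℤ) * n : ℤ)) : ZMod (M * q))
          * g (((r.val : ℤ) + ((M * q : ℕ) : ℤ) * n : ℤ) : ℝ)
        = c1 r * g ((r.val : ℝ) + c * n) := by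
      intro n
      rw [hcastr r n]
      congr 2
      rw [hc]
      push_cast
      ring
    rw [tsum_congr e3, tsum_mul_left, poisson_scaled g hcpos ((r.val : ℝ))]
  rw [Finset.sum_congr rfl fun r _ => hrow r]
  -- swap the finite sum and the series
  have hswap_sum : ∀ r : ZMod (M * q), Summable (fun h : ℤ =>
      c1 r * (((c : ℝ) : ℂ)⁻¹ * FourierTransform.fourier (⇑g) (h / c)
        * Complex.exp (2 * Real.pi * Complex.I * h * (r.val : ℝ) / c))) := by
    intro r
    apply Summable.of_norm
    refine Summable.of_nonneg_of_le (fun _ => norm_nonneg _) (fun h => ?_)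
      (hFsum.mul_left (c⁻¹))
    have hninv : ‖(((c : ℝ)) : ℂ)⁻¹‖ = c⁻¹ := by
      rw [norm_inv, Complex.norm_real, Real.norm_eq_abs, abs_of_pos hcpos]
    have hE : ‖Complex.exp (2 * Real.pi * Complex.I * h * (r.val : ℝ) / c)‖ = 1 :=
      norm_exp_eq_one_aux (2 * Real.pi * h * (r.val : ℝ) / c) _ (by push_cast; ring)
    calc ‖c1 r * (((c : ℝ) : ℂ)⁻¹ * FourierTransform.fourier (⇑g) (h / c)
            * Complex.exp (2 * Real.pi * Complex.I * h * (r.val : ℝ) / c))‖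
        = ‖c1 r‖ * ‖((c : ℝ) : ℂ)⁻¹ * FourierTransform.fourier (⇑g) (h / c)
            * Complex.exp (2 * Real.pi * Complex.I * h * (r.val : ℝ) / c)‖ := norm_mul _ _
      _ ≤ 1 * ‖((c : ℝ) : ℂ)⁻¹ * FourierTransform.fourier (⇑g) (h / c)
            * Complex.exp (2 * Real.pi * Complex.I * h * (r.val : ℝ) / c)‖ :=
          mul_le_mul_of_nonneg_right (hc1norm r) (norm_nonneg _)
      _ = ‖((c : ℝ) : ℂ)⁻¹‖ * ‖FourierTransform.fourier (⇑g) (h / c)‖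
            * ‖Complex.exp (2 * Real.pi * Complex.I * h * (r.val : ℝ) / c)‖ := by
          rw [one_mul, norm_mul, norm_mul]
      _ = c⁻¹ * ‖FourierTransform.fourier (⇑g) ((h : ℝ) / c)‖ := by rw [hninv, hE, mul_one]
  have hswap : (∑ r : ZMod (M * q), c1 r
        * ∑' h : ℤ, ((c : ℝ) : ℂ)⁻¹ * FourierTransform.fourier (⇑g) (h / c)
            * Complex.exp (2 * Real.pi * Complex.I * h * (r.val : ℝ) / c))
      = ∑' h : ℤ, ∑ r : ZMod (M * q), c1 r
          * (((c : ℝ) : ℂ)⁻¹ * FourierTransform.fourier (⇑g) (h / c)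
            * Complex.exp (2 * Real.pi * Complex.I * h * (r.val : ℝ) / c)) := by
    calc (∑ r : ZMod (M * q), c1 r
        * ∑' h : ℤ, ((c : ℝ) : ℂ)⁻¹ * FourierTransform.fourier (⇑g) (h / c)
            * Complex.exp (2 * Real.pi * Complex.I * h * (r.val : ℝ) / c))
        = ∑ r : ZMod (M * q), ∑' h : ℤ, c1 r
            * (((c : ℝ) : ℂ)⁻¹ * FourierTransform.fourier (⇑g) (h / c)
              * Complex.exp (2 * Real.pi * Complex.I * h * (r.val : ℝ) / c)) :=
          Finset.sum_congr rfl fun r _ => (tsum_mul_left).symm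
      _ = _ := (Summable.tsum_finsetSum (fun r _ => hswap_sum r)).symm
  rw [hswap]
  have hcC : (((c : ℝ)) : ℂ) = (M : ℂ) * (q : ℂ) := by rw [hc]; push_cast; rfl
  have hinner : ∀ h : ℤ, (∑ r : ZMod (M * q), c1 r
        * (((c : ℝ) : ℂ)⁻¹ * FourierTransform.fourier (⇑g) (h / c)
          * Complex.exp (2 * Real.pi * Complex.I * h * (r.val : ℝ) / c)))
      = (((c : ℝ) : ℂ)⁻¹ * FourierTransform.fourier (⇑g) (h / c))
          * (χ (q : ZMod M) * (χ⁻¹ (((h - a * M : ℤ) : ZMod M)) * τ)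
            * (if ((h - a * M : ℤ) : ZMod q) = 0 then (q : ℂ) else 0)) := by
    intro h
    have hterm : ∀ r : ZMod (M * q), c1 r
          * (((c : ℝ) : ℂ)⁻¹ * FourierTransform.fourier (⇑g) (h / c)
            * Complex.exp (2 * Real.pi * Complex.I * h * (r.val : ℝ) / c))
        = (((c : ℝ) : ℂ)⁻¹ * FourierTransform.fourier (⇑g) (h / c))
            * (χ (ZMod.castHom (dvd_mul_right M q) (ZMod M) r)
              * ZMod.stdAddChar ((((h - a * M : ℤ)) : ZMod (M * q)) * r)) := by
      intro r
      have hE : Complex.exp (2 * Real.pi * Complex.I * h * (r.val : ℝ) / c)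
          = ZMod.stdAddChar (((h : ℤ) : ZMod (M * q)) * r) := by
        rw [show ((h : ℤ) : ZMod (M * q)) * r = ((h * (r.val : ℤ) : ℤ) : ZMod (M * q)) by
          push_cast; rw [ZMod.natCast_rightInverse r], ZMod.stdAddChar_coe]
        congr 1
        rw [hc]
        push_cast
        ring
      have hsplit : ZMod.stdAddChar (A * r) * ZMod.stdAddChar (((h : ℤ) : ZMod (M * q)) * r)
          = ZMod.stdAddChar ((((h - a * M : ℤ)) : ZMod (M * q)) * r) := by
        rw [← AddChar.map_add_eq_mul, ← add_mul]
        congr 2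
        rw [hA]
        push_cast
        ring
      rw [hE, hc1]
      simp only []
      rw [← hsplit]
      ring
    rw [Finset.sum_congr rfl fun r _ => hterm r, ← Finset.mul_sum,
      char_sum_eval M q χ hχ hqM (h - a * M)]
  rw [tsum_congr hinner]
  have hG : gaussSumExp M χ = τ := by
    unfold gaussSumExp
    rw [hτ]
    exact gaussSumExp' M χ
  rw [hG, ← tsum_mul_left]
  refine tsum_congr fun h => ?_
  have e5 : ((h - a * M : ℤ) : ZMod M) = ((h : ℤ) : ZMod M) := by
    push_cast
    simp [ZMod.natCast_self]
  have e6 : (((h - a * M : ℤ) : ZMod q) = 0) ↔ ((h : ZMod q) = ((a * M : ℤ) : ZMod q)) := by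
    rw [show ((h - a * M : ℤ) : ZMod q) = ((h : ℤ) : ZMod q) - ((a * M : ℤ) : ZMod q) by
      push_cast; ring, sub_eq_zero]
  have e7 : χ⁻¹ (((h : ℤ) : ZMod M)) = (starRingEnd ℂ) (χ ((h : ℤ) : ZMod M)) := by
    rw [starRingEnd_apply, MulChar.star_apply']
  rw [e5, e7]
  by_cases hcond : (h : ZMod q) = ((a * M : ℤ) : ZMod q)
  · rw [if_pos (e6.mpr hcond), if_pos hcond, hHat h, hcC]
    field_simp
  · rw [if_neg (fun hx => hcond (e6.mp hx)), if_neg hcond]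
    simp
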